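/- For every probability vector p and every ε > 0 there exist δ_0 > 0 and c > 0, depending only on p and ε, such that for all 0 < δ ≤ δ_0 and all real C ≥ C_p^− + ε, every δ-stable tuple (b_0, b_{k−1}, c_0, …, c_{k−1}) of nonnegative reals with min(b_0, b_{k−1}) = 0 satisfies c_X ≤ −c < 0. -/
import Mathlib


open Finset

namespace RiffleShuffle

/-- `phi p t = ∑ i, p i ^ t`. -/
noncomputable def phi {k : ℕ} (p : Fin k → ℝ) (t : ℝ) : ℝ := ∑ i, p i ^ t

/-- `psi p t = - log (phi p t)`. -/
noncomputable def psi {k : ℕ} (p : Fin k → ℝ) (t : ℝ) : ℝ := - Real.log (phi p t)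

/-- `C_p = (3+θ)/(4 ψ_p(2))`, where `θ` is the solution of `φ_p(θ) = φ_p(2)²`. -/
noncomputable def Cmain {k : ℕ} (p : Fin k → ℝ) (θ : ℝ) : ℝ := (3 + θ) / (4 * psi p 2)

/-- The entropy of the probability vector with weights `a i / (∑ j, a j)`.  The conventions
`x * log (y/0) = 0` for `x = 0` and `0/0 = 0` built into real division make this agree with
the usual convention (zero entries contribute `0`, and `H = 0` when all entries vanish). -/
noncomputable def Hent {k : ℕ} (a : Fin k → ℝ) : ℝ :=
  (∑ i, a i * Real.log ((∑ j, a j) / a i)) / (∑ j, a j)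

/-- `c_L` of a digit profile; `d0` and `dlast` denote the digits `0` and `k-1`. -/
noncomputable def cL {k : ℕ} (p : Fin k → ℝ) (d0 dlast : Fin k) (b0 bk : ℝ)
    (c : Fin k → ℝ) : ℝ :=
  1 - b0 * Real.log (1 / p d0) - bk * Real.log (1 / p dlast) - ∑ i, c i * Real.log (1 / p i)

/-- `c_F` of a digit profile. -/
noncomputable def cF {k : ℕ} (p : Fin k → ℝ) (d0 dlast : Fin k) (b0 bk : ℝ) : ℝ :=
  (1 - b0 * Real.log (1 / p d0) - bk * Real.log (1 / p dlast)) / 2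

/-- `c_E` of a digit profile, with `C` playing the role of `K / log N`. -/
noncomputable def cE {k : ℕ} (p : Fin k → ℝ) (C b0 bk : ℝ) (c : Fin k → ℝ) : ℝ :=
  (b0 + bk + (∑ i, c i) - C) * psi p 2

/-- `c_X = c_tot H(c_0,…,c_{k-1}) + 5 c_L - 2 c_F + 2 c_E`. -/
noncomputable def cX {k : ℕ} (p : Fin k → ℝ) (d0 dlast : Fin k) (C b0 bk : ℝ)
    (c : Fin k → ℝ) : ℝ :=
  (∑ i, c i) * Hent c + 5 * cL p d0 dlast b0 bk c - 2 * cF p d0 dlast b0 bk +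
    2 * cE p C b0 bk c

private lemma log_term_le (t T a : ℝ) (ht : 0 ≤ t) (htT : t ≤ T) :
    t * Real.log (T / t) + a * t ≤ Real.exp a * T - t := by
  rcases ht.eq_or_lt with h | h
  · rw [← h]
    simpa using mul_nonneg (Real.exp_pos a).le (le_trans ht htT)
  · have hT : 0 < T := h.trans_le htT
    have hq : (0:ℝ) < Real.exp a * T / t := by positivity
    have h1 : Real.log (T / t) + a = Real.log (Real.exp a * T / t) := by
      rw [Real.log_div hT.ne' h.ne', Real.log_div (mul_pos (Real.exp_pos a) hT).ne' h.ne',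
        Real.log_mul (Real.exp_ne_zero a) hT.ne', Real.log_exp]
      ring
    calc t * Real.log (T / t) + a * t = t * (Real.log (T / t) + a) := by ring
      _ = t * Real.log (Real.exp a * T / t) := by rw [h1]
      _ ≤ t * (Real.exp a * T / t - 1) :=
          mul_le_mul_of_nonneg_left (Real.log_le_sub_one_of_pos hq) ht
      _ = Real.exp a * T - t := by field_simp

private lemma entropy_key (k : ℕ) (p : Fin k → ℝ) (θ ψ2 : ℝ)
    (hq : ∑ i, Real.exp (2 * ψ2 - θ * Real.log (1 / p i)) = 1)
    (cv : Fin k → ℝ) (hcv : ∀ i, 0 ≤ cv i) :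
    (∑ i, cv i * Real.log ((∑ j, cv j) / cv i)) + 2 * ψ2 * (∑ i, cv i)
      ≤ θ * ∑ i, cv i * Real.log (1 / p i) := by
  have hterm : ∀ i ∈ Finset.univ, cv i * Real.log ((∑ j, cv j) / cv i)
      + (2 * ψ2 - θ * Real.log (1 / p i)) * cv i
      ≤ Real.exp (2 * ψ2 - θ * Real.log (1 / p i)) * (∑ j, cv j) - cv i := fun i _ =>
    log_term_le _ _ _ (hcv i) (Finset.single_le_sum (fun j _ => hcv j) (Finset.mem_univ i))
  have hsum := Finset.sum_le_sum hterm
  rw [Finset.sum_add_distrib, Finset.sum_sub_distrib, ← Finset.sum_mul, hq, one_mul] at hsum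
  have e2 : ∀ i : Fin k, (2 * ψ2 - θ * Real.log (1 / p i)) * cv i
      = 2 * ψ2 * cv i - θ * (cv i * Real.log (1 / p i)) := fun i => by ring
  simp_rw [e2] at hsum
  rw [Finset.sum_sub_distrib, ← Finset.mul_sum, ← Finset.mul_sum] at hsum
  linarith

private lemma final_ineq (A S T B b0 bk C M ψ2 θ ε δ : ℝ)
    (hψ : 0 < ψ2) (hδ : 0 < δ)
    (hS : 0 ≤ S) (hB : 0 ≤ B)
    (hsl : δ ≤ (1 - B) / 2 - S) (hsr : (1 - B) / 2 - S ≤ 2 * δ)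
    (key : A + 2 * ψ2 * T ≤ θ * S)
    (hbb : b0 + bk ≤ M * B)
    (h1 : (3 + θ) / 2 ≤ 2 * (C - ε) * ψ2)
    (h2 : 2 * M * ψ2 ≤ 2 * (C - ε) * ψ2)
    (hdelta : 2 * (|5 - θ| + 1) * δ ≤ ε * ψ2) :
    A + 5 * (1 - B - S) - 2 * ((1 - B) / 2) + 2 * ((b0 + bk + T - C) * ψ2) ≤ -(ε * ψ2) := by
  have hB1 : B ≤ 1 := by linarith
  have hu0 : 0 ≤ (1 - B) / 2 - S := by linarith
  have c2 : 2 * (b0 + bk) * ψ2 ≤ 2 * (M * B) * ψ2 := by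
    nlinarith [mul_le_mul_of_nonneg_right hbb hψ.le]
  have c3 : (1 - B) * ((3 + θ) / 2) + B * (2 * M * ψ2) ≤ 2 * (C - ε) * ψ2 := by
    nlinarith [mul_le_mul_of_nonneg_left h1 (by linarith : (0:ℝ) ≤ 1 - B),
      mul_le_mul_of_nonneg_left h2 hB]
  have c4 : (5 - θ) * ((1 - B) / 2 - S) ≤ |5 - θ| * ((1 - B) / 2 - S) :=
    mul_le_mul_of_nonneg_right (le_abs_self _) hu0
  have c5 : |5 - θ| * ((1 - B) / 2 - S) ≤ |5 - θ| * (2 * δ) :=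
    mul_le_mul_of_nonneg_left hsr (abs_nonneg _)
  nlinarith [c2, c3, c4, c5, key, hdelta, hδ]

set_option maxHeartbeats 1000000 in
private lemma main_aux (k : ℕ) (hk : 2 ≤ k) (p : Fin k → ℝ)
    (hpos : ∀ i, 0 < p i) (hsum : ∑ i, p i = 1)
    (θ : ℝ) (hθ : phi p θ = (phi p 2) ^ 2) (ε : ℝ) (hε : 0 < ε)
    (d0 dlast : Fin k) :
    ∃ δ₀ : ℝ, 0 < δ₀ ∧ ∃ c : ℝ, 0 < c ∧
      ∀ δ : ℝ, 0 < δ → δ ≤ δ₀ →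
      ∀ C : ℝ,
        max (Cmain p θ) (max (1 / Real.log (1 / p d0)) (1 / Real.log (1 / p dlast))) + ε ≤ C →
      ∀ (b0 bk : ℝ) (cv : Fin k → ℝ),
        0 ≤ b0 → 0 ≤ bk → (∀ i, 0 ≤ cv i) → min b0 bk = 0 →
        cL p d0 dlast b0 bk cv - cF p d0 dlast b0 bk ∈ Set.Icc δ (2 * δ) →
        cX p d0 dlast C b0 bk cv ≤ -c := by
  have hlt1 : ∀ i, p i < 1 := by
    intro i
    obtain ⟨j, hj⟩ := Fintype.exists_ne_of_one_lt_card (by simp only [Fintype.card_fin]; omega) i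
    have h := Finset.single_lt_sum hj (Finset.mem_univ i) (Finset.mem_univ j) (hpos j)
      (fun t _ _ => (hpos t).le)
    rwa [hsum] at h
  have hφ2pos : 0 < phi p 2 :=
    Finset.sum_pos (fun i _ => Real.rpow_pos_of_pos (hpos i) 2) ⟨⟨0, by omega⟩, Finset.mem_univ _⟩
  have hrpow2 : ∀ i : Fin k, p i ^ (2:ℝ) = p i * p i := fun i => by
    rw [show (2:ℝ) = ((2:ℕ):ℝ) by norm_num, Real.rpow_natCast]; ring
  have hφ2lt1 : phi p 2 < 1 := by
    have h1 : phi p 2 = ∑ i, p i * p i := Finset.sum_congr rfl fun i _ => hrpow2 i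
    rw [h1, ← hsum]
    exact Finset.sum_lt_sum (fun i _ => by nlinarith [hpos i, hlt1 i])
      ⟨⟨0, by omega⟩, Finset.mem_univ _, by nlinarith [hpos (⟨0, by omega⟩ : Fin k), hlt1 (⟨0, by omega⟩ : Fin k)]⟩
  have hψpos : 0 < psi p 2 := by
    have h := Real.log_neg hφ2pos hφ2lt1
    simp only [psi]; linarith
  have hlampos : ∀ i, 0 < Real.log (1 / p i) := fun i =>
    Real.log_pos (by rw [lt_div_iff₀ (hpos i)]; linarith [hlt1 i])
  have hq : ∑ i, Real.exp (2 * psi p 2 - θ * Real.log (1 / p i)) = 1 := by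
    have hexp : ∀ i : Fin k, Real.exp (2 * psi p 2 - θ * Real.log (1 / p i))
        = (phi p 2 * phi p 2)⁻¹ * p i ^ θ := by
      intro i
      have h1 : Real.log (1 / p i) = -Real.log (p i) := by rw [one_div, Real.log_inv]
      have h2 : 2 * psi p 2 - θ * Real.log (1 / p i)
          = -Real.log (phi p 2) + (-Real.log (phi p 2) + Real.log (p i) * θ) := by
        rw [h1]; simp only [psi]; ring
      rw [h2, Real.exp_add, Real.exp_add, Real.exp_neg, Real.exp_log hφ2pos,
        ← Real.rpow_def_of_pos (hpos i), mul_inv]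
      ring
    calc ∑ i, Real.exp (2 * psi p 2 - θ * Real.log (1 / p i))
        = ∑ i, (phi p 2 * phi p 2)⁻¹ * p i ^ θ := Finset.sum_congr rfl fun i _ => hexp i
      _ = (phi p 2 * phi p 2)⁻¹ * ∑ i, p i ^ θ := by rw [Finset.mul_sum]
      _ = (phi p 2 * phi p 2)⁻¹ * (phi p 2 * phi p 2) := by
          rw [show (∑ i, p i ^ θ) = phi p θ from rfl, hθ, pow_two]
      _ = 1 := inv_mul_cancel₀ (mul_pos hφ2pos hφ2pos).ne'
  refine ⟨ε * psi p 2 / (2 * (|5 - θ| + 1)), div_pos (mul_pos hε hψpos) (by positivity),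
    ε * psi p 2, mul_pos hε hψpos, ?_⟩
  intro δ hδ hδ0 C hC b0 bk cv hb0 hbk hcv hmin hs
  obtain ⟨hsl, hsr⟩ := hs
  simp only [cL, cF] at hsl hsr
  have key0 := entropy_key k p θ (psi p 2) hq cv hcv
  have hH : (∑ i, cv i) * Hent cv = ∑ i, cv i * Real.log ((∑ j, cv j) / cv i) := by
    rcases eq_or_ne (∑ i, cv i) 0 with h | h
    · have hz : ∀ i ∈ Finset.univ, cv i = 0 :=
        fun i hi => ((Finset.sum_eq_zero_iff_of_nonneg (fun j _ => hcv j)).mp h) i hi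
      rw [h, zero_mul]
      exact (Finset.sum_eq_zero fun i hi => by rw [hz i hi, zero_mul]).symm
    · simp only [Hent]
      rw [mul_comm, div_mul_cancel₀ _ h]
  have hS0 : 0 ≤ ∑ i, cv i * Real.log (1 / p i) :=
    Finset.sum_nonneg fun i _ => mul_nonneg (hcv i) (hlampos i).le
  have hB0 : 0 ≤ b0 * Real.log (1 / p d0) + bk * Real.log (1 / p dlast) :=
    add_nonneg (mul_nonneg hb0 (hlampos d0).le) (mul_nonneg hbk (hlampos dlast).le)
  have hsl' : δ ≤ (1 - (b0 * Real.log (1 / p d0) + bk * Real.log (1 / p dlast))) / 2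
      - ∑ i, cv i * Real.log (1 / p i) := by linarith
  have hsr' : (1 - (b0 * Real.log (1 / p d0) + bk * Real.log (1 / p dlast))) / 2
      - (∑ i, cv i * Real.log (1 / p i)) ≤ 2 * δ := by linarith
  have hmax' : max (Cmain p θ) (max (1 / Real.log (1 / p d0)) (1 / Real.log (1 / p dlast)))
      ≤ C - ε := by linarith
  have hCm : Cmain p θ ≤ C - ε := le_trans (le_max_left _ _) hmax'
  have hM' : max (1 / Real.log (1 / p d0)) (1 / Real.log (1 / p dlast)) ≤ C - ε :=
    le_trans (le_max_right _ _) hmax'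
  have h1 : (3 + θ) / 2 ≤ 2 * (C - ε) * psi p 2 := by
    rw [Cmain, div_le_iff₀ (by linarith : (0:ℝ) < 4 * psi p 2)] at hCm
    nlinarith [hCm]
  have h2 : 2 * (max (1 / Real.log (1 / p d0)) (1 / Real.log (1 / p dlast))) * psi p 2
      ≤ 2 * (C - ε) * psi p 2 := by
    nlinarith [mul_le_mul_of_nonneg_right hM' hψpos.le]
  have h10 : 1 ≤ (max (1 / Real.log (1 / p d0)) (1 / Real.log (1 / p dlast))) * Real.log (1 / p d0) :=
    (div_le_iff₀ (hlampos d0)).mp (le_max_left _ _)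
  have h1k : 1 ≤ (max (1 / Real.log (1 / p d0)) (1 / Real.log (1 / p dlast))) * Real.log (1 / p dlast) :=
    (div_le_iff₀ (hlampos dlast)).mp (le_max_right _ _)
  have hbb : b0 + bk ≤ (max (1 / Real.log (1 / p d0)) (1 / Real.log (1 / p dlast)))
      * (b0 * Real.log (1 / p d0) + bk * Real.log (1 / p dlast)) := by
    nlinarith [mul_le_mul_of_nonneg_left h10 hb0, mul_le_mul_of_nonneg_left h1k hbk,
      hb0, hbk]
  have hdelta : 2 * (|5 - θ| + 1) * δ ≤ ε * psi p 2 := by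
    have h := (le_div_iff₀ (by positivity : (0:ℝ) < 2 * (|5 - θ| + 1))).mp hδ0
    linarith
  calc cX p d0 dlast C b0 bk cv
      = (∑ i, cv i * Real.log ((∑ j, cv j) / cv i))
        + 5 * (1 - (b0 * Real.log (1 / p d0) + bk * Real.log (1 / p dlast))
            - ∑ i, cv i * Real.log (1 / p i))
        - 2 * ((1 - (b0 * Real.log (1 / p d0) + bk * Real.log (1 / p dlast))) / 2)
        + 2 * ((b0 + bk + (∑ i, cv i) - C) * psi p 2) := by
        simp only [cX, cL, cF, cE]; rw [hH]; ring
    _ ≤ -(ε * psi p 2) :=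
        final_ineq _ _ _ _ _ _ _ _ _ _ _ _ hψpos hδ hS0 hB0 hsl' hsr' key0 hbb h1 h2 hdelta

/-- **Lemma (numerics for the upper bound)**: for `δ` small enough and
`C ≥ C_p^- + ε` (where `C_p^- = max(C_p, 1/log(1/p₀), 1/log(1/p_{k-1}))`), every `δ`-stable
digit profile satisfies `c_X ≤ -c < 0` for some `c = c(p,ε) > 0`. -/
theorem cX_neg (k : ℕ) (hk : 2 ≤ k) (p : Fin k → ℝ)
    (hpos : ∀ i, 0 < p i) (hsum : ∑ i, p i = 1)
    (θ : ℝ) (hθ : phi p θ = (phi p 2) ^ 2) (ε : ℝ) (hε : 0 < ε) :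
    ∃ δ₀ : ℝ, 0 < δ₀ ∧ ∃ c : ℝ, 0 < c ∧
      ∀ δ : ℝ, 0 < δ → δ ≤ δ₀ →
      ∀ C : ℝ,
        max (Cmain p θ) (max (1 / Real.log (1 / p ⟨0, by omega⟩))
          (1 / Real.log (1 / p ⟨k - 1, by omega⟩))) + ε ≤ C →
      ∀ (b0 bk : ℝ) (cv : Fin k → ℝ),
        0 ≤ b0 → 0 ≤ bk → (∀ i, 0 ≤ cv i) → min b0 bk = 0 →
        cL p ⟨0, by omega⟩ ⟨k - 1, by omega⟩ b0 bk cv - cF p ⟨0, by omega⟩ ⟨k - 1, by omega⟩ b0 bk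
          ∈ Set.Icc δ (2 * δ) →
        cX p ⟨0, by omega⟩ ⟨k - 1, by omega⟩ C b0 bk cv ≤ -c := by
  exact main_aux k hk p hpos hsum θ hθ ε hε ⟨0, by omega⟩ ⟨k - 1, by omega⟩

end RiffleShuffle
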